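/- Any linear map A ∈ GL(7,ℝ) that preserves the G₂ 3-form φ (i.e. A*φ = φ) preserves the standard inner product and the standard orientation of ℝ⁷; that is, the stabilizer of φ in GL(7,ℝ) is contained in SO(7). -/

import Mathlib

/- STATEMENT 10: Any A ∈ GL(7,ℝ) preserving the G₂ 3-form φ preserves the standard
inner product and orientation of ℝ⁷: the stabilizer of φ in GL(7,ℝ) is contained in
SO(7).

Forms on ℝ⁷ are modeled in the exterior algebra of ℝ⁷ (standard basis identifying ℝ⁷
with its dual, indices 0-based); A preserves φ iff the induced algebra map fixes φ.
Orthogonality is ⟨Av,Aw⟩ = ⟨v,w⟩ and orientation-preservation (given orthogonality) is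
det A = 1. -/
open ExteriorAlgebra

noncomputable def e (i : Fin 7) : ExteriorAlgebra ℝ (Fin 7 → ℝ) :=
  ExteriorAlgebra.ι ℝ (Pi.single i 1)

noncomputable def φ₀ : ExteriorAlgebra ℝ (Fin 7 → ℝ) :=
  e 0 * e 1 * e 2 + e 0 * e 3 * e 4 + e 0 * e 5 * e 6 + e 1 * e 3 * e 5
    - e 1 * e 4 * e 6 - e 2 * e 3 * e 6 - e 2 * e 4 * e 5

set_option maxHeartbeats 4000000
set_option maxRecDepth 4000

open CliffordAlgebra


noncomputable def f (u : Fin 7 → Fin 7 → ℝ) (i : Fin 7) : ExteriorAlgebra ℝ (Fin 7 → ℝ) :=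
  ExteriorAlgebra.ι ℝ (u i)

lemma fsw (u : Fin 7 → Fin 7 → ℝ) (i j : Fin 7) : f u i * f u j = -(f u j * f u i) := by
  rw [eq_neg_iff_add_eq_zero]; exact ι_add_mul_swap (u i) (u j)

lemma fsw' (u : Fin 7 → Fin 7 → ℝ) (i j : Fin 7) (x : ExteriorAlgebra ℝ (Fin 7 → ℝ)) :
    f u i * (f u j * x) = -(f u j * (f u i * x)) := by
  rw [← mul_assoc, fsw, neg_mul, mul_assoc]

lemma fsq (u : Fin 7 → Fin 7 → ℝ) (i : Fin 7) : f u i * f u i = 0 := ι_sq_zero (u i)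

lemma fsq' (u : Fin 7 → Fin 7 → ℝ) (i : Fin 7) (x : ExteriorAlgebra ℝ (Fin 7 → ℝ)) :
    f u i * (f u i * x) = 0 := by rw [← mul_assoc, fsq, zero_mul]

lemma c3 (g : Module.Dual ℝ (Fin 7 → ℝ)) (u : Fin 7 → Fin 7 → ℝ) (i j k : Fin 7) :
    contractLeft g (f u i * (f u j * f u k)) =
      g (u i) • (f u j * f u k) - g (u j) • (f u i * f u k) + g (u k) • (f u i * f u j) := by
  simp [f, contractLeft_ι_mul, contractLeft_ι, mul_sub, sub_mul, smul_smul,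
    Algebra.algebraMap_eq_smul_one, mul_smul_comm, smul_mul_assoc]
  module

noncomputable def Phi (u : Fin 7 → Fin 7 → ℝ) : ExteriorAlgebra ℝ (Fin 7 → ℝ) :=

  (f u 0 * (f u 1 * (f u 2))) + (f u 0 * (f u 3 * (f u 4))) + (f u 0 * (f u 5 * (f u 6))) + (f u 1 * (f u 3 * (f u 5))) - (f u 1 * (f u 4 * (f u 6))) - (f u 2 * (f u 3 * (f u 6))) - (f u 2 * (f u 4 * (f u 5)))

lemma sw_1_0 (u : Fin 7 → Fin 7 → ℝ) (x : ExteriorAlgebra ℝ (Fin 7 → ℝ)) : f u 1 * (f u 0 * x) = -(f u 0 * (f u 1 * x)) := fsw' u 1 0 x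

lemma swl_1_0 (u : Fin 7 → Fin 7 → ℝ) : f u 1 * f u 0 = -(f u 0 * f u 1) := fsw u 1 0

lemma sw_2_0 (u : Fin 7 → Fin 7 → ℝ) (x : ExteriorAlgebra ℝ (Fin 7 → ℝ)) : f u 2 * (f u 0 * x) = -(f u 0 * (f u 2 * x)) := fsw' u 2 0 x

lemma swl_2_0 (u : Fin 7 → Fin 7 → ℝ) : f u 2 * f u 0 = -(f u 0 * f u 2) := fsw u 2 0

lemma sw_2_1 (u : Fin 7 → Fin 7 → ℝ) (x : ExteriorAlgebra ℝ (Fin 7 → ℝ)) : f u 2 * (f u 1 * x) = -(f u 1 * (f u 2 * x)) := fsw' u 2 1 x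

lemma swl_2_1 (u : Fin 7 → Fin 7 → ℝ) : f u 2 * f u 1 = -(f u 1 * f u 2) := fsw u 2 1

lemma sw_3_0 (u : Fin 7 → Fin 7 → ℝ) (x : ExteriorAlgebra ℝ (Fin 7 → ℝ)) : f u 3 * (f u 0 * x) = -(f u 0 * (f u 3 * x)) := fsw' u 3 0 x

lemma swl_3_0 (u : Fin 7 → Fin 7 → ℝ) : f u 3 * f u 0 = -(f u 0 * f u 3) := fsw u 3 0

lemma sw_3_1 (u : Fin 7 → Fin 7 → ℝ) (x : ExteriorAlgebra ℝ (Fin 7 → ℝ)) : f u 3 * (f u 1 * x) = -(f u 1 * (f u 3 * x)) := fsw' u 3 1 x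

lemma swl_3_1 (u : Fin 7 → Fin 7 → ℝ) : f u 3 * f u 1 = -(f u 1 * f u 3) := fsw u 3 1

lemma sw_3_2 (u : Fin 7 → Fin 7 → ℝ) (x : ExteriorAlgebra ℝ (Fin 7 → ℝ)) : f u 3 * (f u 2 * x) = -(f u 2 * (f u 3 * x)) := fsw' u 3 2 x

lemma swl_3_2 (u : Fin 7 → Fin 7 → ℝ) : f u 3 * f u 2 = -(f u 2 * f u 3) := fsw u 3 2

lemma sw_4_0 (u : Fin 7 → Fin 7 → ℝ) (x : ExteriorAlgebra ℝ (Fin 7 → ℝ)) : f u 4 * (f u 0 * x) = -(f u 0 * (f u 4 * x)) := fsw' u 4 0 x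

lemma swl_4_0 (u : Fin 7 → Fin 7 → ℝ) : f u 4 * f u 0 = -(f u 0 * f u 4) := fsw u 4 0

lemma sw_4_1 (u : Fin 7 → Fin 7 → ℝ) (x : ExteriorAlgebra ℝ (Fin 7 → ℝ)) : f u 4 * (f u 1 * x) = -(f u 1 * (f u 4 * x)) := fsw' u 4 1 x

lemma swl_4_1 (u : Fin 7 → Fin 7 → ℝ) : f u 4 * f u 1 = -(f u 1 * f u 4) := fsw u 4 1

lemma sw_4_2 (u : Fin 7 → Fin 7 → ℝ) (x : ExteriorAlgebra ℝ (Fin 7 → ℝ)) : f u 4 * (f u 2 * x) = -(f u 2 * (f u 4 * x)) := fsw' u 4 2 x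

lemma swl_4_2 (u : Fin 7 → Fin 7 → ℝ) : f u 4 * f u 2 = -(f u 2 * f u 4) := fsw u 4 2

lemma sw_4_3 (u : Fin 7 → Fin 7 → ℝ) (x : ExteriorAlgebra ℝ (Fin 7 → ℝ)) : f u 4 * (f u 3 * x) = -(f u 3 * (f u 4 * x)) := fsw' u 4 3 x

lemma swl_4_3 (u : Fin 7 → Fin 7 → ℝ) : f u 4 * f u 3 = -(f u 3 * f u 4) := fsw u 4 3

lemma sw_5_0 (u : Fin 7 → Fin 7 → ℝ) (x : ExteriorAlgebra ℝ (Fin 7 → ℝ)) : f u 5 * (f u 0 * x) = -(f u 0 * (f u 5 * x)) := fsw' u 5 0 x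

lemma swl_5_0 (u : Fin 7 → Fin 7 → ℝ) : f u 5 * f u 0 = -(f u 0 * f u 5) := fsw u 5 0

lemma sw_5_1 (u : Fin 7 → Fin 7 → ℝ) (x : ExteriorAlgebra ℝ (Fin 7 → ℝ)) : f u 5 * (f u 1 * x) = -(f u 1 * (f u 5 * x)) := fsw' u 5 1 x

lemma swl_5_1 (u : Fin 7 → Fin 7 → ℝ) : f u 5 * f u 1 = -(f u 1 * f u 5) := fsw u 5 1

lemma sw_5_2 (u : Fin 7 → Fin 7 → ℝ) (x : ExteriorAlgebra ℝ (Fin 7 → ℝ)) : f u 5 * (f u 2 * x) = -(f u 2 * (f u 5 * x)) := fsw' u 5 2 x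

lemma swl_5_2 (u : Fin 7 → Fin 7 → ℝ) : f u 5 * f u 2 = -(f u 2 * f u 5) := fsw u 5 2

lemma sw_5_3 (u : Fin 7 → Fin 7 → ℝ) (x : ExteriorAlgebra ℝ (Fin 7 → ℝ)) : f u 5 * (f u 3 * x) = -(f u 3 * (f u 5 * x)) := fsw' u 5 3 x

lemma swl_5_3 (u : Fin 7 → Fin 7 → ℝ) : f u 5 * f u 3 = -(f u 3 * f u 5) := fsw u 5 3

lemma sw_5_4 (u : Fin 7 → Fin 7 → ℝ) (x : ExteriorAlgebra ℝ (Fin 7 → ℝ)) : f u 5 * (f u 4 * x) = -(f u 4 * (f u 5 * x)) := fsw' u 5 4 x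

lemma swl_5_4 (u : Fin 7 → Fin 7 → ℝ) : f u 5 * f u 4 = -(f u 4 * f u 5) := fsw u 5 4

lemma sw_6_0 (u : Fin 7 → Fin 7 → ℝ) (x : ExteriorAlgebra ℝ (Fin 7 → ℝ)) : f u 6 * (f u 0 * x) = -(f u 0 * (f u 6 * x)) := fsw' u 6 0 x

lemma swl_6_0 (u : Fin 7 → Fin 7 → ℝ) : f u 6 * f u 0 = -(f u 0 * f u 6) := fsw u 6 0

lemma sw_6_1 (u : Fin 7 → Fin 7 → ℝ) (x : ExteriorAlgebra ℝ (Fin 7 → ℝ)) : f u 6 * (f u 1 * x) = -(f u 1 * (f u 6 * x)) := fsw' u 6 1 x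

lemma swl_6_1 (u : Fin 7 → Fin 7 → ℝ) : f u 6 * f u 1 = -(f u 1 * f u 6) := fsw u 6 1

lemma sw_6_2 (u : Fin 7 → Fin 7 → ℝ) (x : ExteriorAlgebra ℝ (Fin 7 → ℝ)) : f u 6 * (f u 2 * x) = -(f u 2 * (f u 6 * x)) := fsw' u 6 2 x

lemma swl_6_2 (u : Fin 7 → Fin 7 → ℝ) : f u 6 * f u 2 = -(f u 2 * f u 6) := fsw u 6 2

lemma sw_6_3 (u : Fin 7 → Fin 7 → ℝ) (x : ExteriorAlgebra ℝ (Fin 7 → ℝ)) : f u 6 * (f u 3 * x) = -(f u 3 * (f u 6 * x)) := fsw' u 6 3 x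

lemma swl_6_3 (u : Fin 7 → Fin 7 → ℝ) : f u 6 * f u 3 = -(f u 3 * f u 6) := fsw u 6 3

lemma sw_6_4 (u : Fin 7 → Fin 7 → ℝ) (x : ExteriorAlgebra ℝ (Fin 7 → ℝ)) : f u 6 * (f u 4 * x) = -(f u 4 * (f u 6 * x)) := fsw' u 6 4 x

lemma swl_6_4 (u : Fin 7 → Fin 7 → ℝ) : f u 6 * f u 4 = -(f u 4 * f u 6) := fsw u 6 4

lemma sw_6_5 (u : Fin 7 → Fin 7 → ℝ) (x : ExteriorAlgebra ℝ (Fin 7 → ℝ)) : f u 6 * (f u 5 * x) = -(f u 5 * (f u 6 * x)) := fsw' u 6 5 x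

lemma swl_6_5 (u : Fin 7 → Fin 7 → ℝ) : f u 6 * f u 5 = -(f u 5 * f u 6) := fsw u 6 5

noncomputable def S (g : Module.Dual ℝ (Fin 7 → ℝ)) (u : Fin 7 → Fin 7 → ℝ) : ExteriorAlgebra ℝ (Fin 7 → ℝ) :=

  (g (u 0)) • (f u 1 * (f u 2)) - (g (u 1)) • (f u 0 * (f u 2)) + (g (u 2)) • (f u 0 * (f u 1)) + (g (u 0)) • (f u 3 * (f u 4)) - (g (u 3)) • (f u 0 * (f u 4)) + (g (u 4)) • (f u 0 * (f u 3)) + (g (u 0)) • (f u 5 * (f u 6)) - (g (u 5)) • (f u 0 * (f u 6)) + (g (u 6)) • (f u 0 * (f u 5)) + (g (u 1)) • (f u 3 * (f u 5)) - (g (u 3)) • (f u 1 * (f u 5)) + (g (u 5)) • (f u 1 * (f u 3)) - (g (u 1)) • (f u 4 * (f u 6)) + (g (u 4)) • (f u 1 * (f u 6)) - (g (u 6)) • (f u 1 * (f u 4)) - (g (u 2)) • (f u 3 * (f u 6)) + (g (u 3)) • (f u 2 * (f u 6)) - (g (u 6)) • (f u 2 * (f u 3)) - (g (u 2)) • (f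 u 4 * (f u 5)) + (g (u 4)) • (f u 2 * (f u 5)) - (g (u 5)) • (f u 2 * (f u 4))

lemma CPhi (g : Module.Dual ℝ (Fin 7 → ℝ)) (u : Fin 7 → Fin 7 → ℝ) :
    contractLeft g (Phi u) = S g u := by
  simp only [Phi, map_add, map_sub, c3, S]
  module

lemma stage2 (h : Module.Dual ℝ (Fin 7 → ℝ)) (u : Fin 7 → Fin 7 → ℝ) :

    S h u * Phi u = (2:ℝ) • (h (u 0)) • (f u 0 * (f u 1 * (f u 2 * (f u 3 * (f u 4))))) + (2:ℝ) • (h (u 1)) • (f u 0 * (f u 1 * (f u 2 * (f u 3 * (f u 5))))) - (2:ℝ) • (h (u 2)) • (f u 0 * (f u 1 * (f u 2 * (f u 3 * (f u 6))))) - (2:ℝ) • (h (u 2)) • (f u 0 * (f u 1 * (f u 2 * (f u 4 * (f u 5))))) - (2:ℝ) • (h (u 1)) • (f u 0 * (f u 1 * (f u 2 * (f u 4 * (f u 6))))) + (2:ℝ) • (h (u 0)) • (f u 0 * (f u 1 * (f u 2 * (f u 5 * (f u 6))))) - (2:ℝ) • (h (u 3)) • (f u 0 * (f u 1 * (f u 3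 * (f u 4 * (f u 5))))) + (2:ℝ) • (h (u 4)) • (f u 0 * (f u 1 * (f u 3 * (f u 4 * (f u 6))))) + (2:ℝ) • (h (u 5)) • (f u 0 * (f u 1 * (f u 3 * (f u 5 * (f u 6))))) - (2:ℝ) • (h (u 6)) • (f u 0 * (f u 1 * (f u 4 * (f u 5 * (f u 6))))) + (2:ℝ) • (h (u 4)) • (f u 0 * (f u 2 * (f u 3 * (f u 4 * (f u 5))))) + (2:ℝ) • (h (u 3)) • (f u 0 * (f u 2 * (f u 3 * (f u 4 * (f u 6))))) - (2:ℝ) • (h (u 6)) • (f u 0 * (f u 2 * (f u 3 * (f u 5 * (f u 6))))) - (2:ℝ) • (h (u 5)) • (f u 0 * (f u 2 * (f u 4 * (f u 5 * (f u 6))))) + (2:ℝ) • (h (u 0)) • (f u 0 * (f u 3 * (f u 4 * (f u 5 * (f u 6))))) + (2:ℝ) • (h (u 5)) • (f u 1 * (f u 2 * (f u 3 * (f u 4 * (f u 5))))) + (2:ℝ) • (h (u 6)) • (f u 1 * (f u 2 * (f u 3 * (f u 4 * (f u 6))))) + (2:ℝ) • (h (u 3)) • (f u 1 * (f u 2 *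 (f u 3 * (f u 5 * (f u 6))))) + (2:ℝ) • (h (u 4)) • (f u 1 * (f u 2 * (f u 4 * (f u 5 * (f u 6))))) + (2:ℝ) • (h (u 1)) • (f u 1 * (f u 3 * (f u 4 * (f u 5 * (f u 6))))) + (2:ℝ) • (h (u 2)) • (f u 2 * (f u 3 * (f u 4 * (f u 5 * (f u 6))))) := by

  simp only [S, Phi, mul_add, add_mul, mul_sub, sub_mul, mul_assoc, smul_mul_assoc, mul_smul_comm, smul_smul, neg_mul, mul_neg, neg_neg, zero_mul, mul_zero, smul_zero, add_zero, zero_add, sub_zero, zero_sub, neg_zero, fsq, fsq', sw_1_0, swl_1_0, sw_2_0, swl_2_0, sw_2_1, swl_2_1, sw_3_0, swl_3_0, sw_3_1, swl_3_1, sw_3_2, swl_3_2, sw_4_0, swl_4_0, sw_4_1, swl_4_1, sw_4_2, swl_4_2, sw_4_3, swl_4_3, sw_5_0, swl_5_0, sw_5_1, swl_5_1, sw_5_2, swl_5_2, sw_5_3, swl_5_3, sw_5_4, swl_5_4, sw_6_0, swl_6_0, sw_6_1, swl_6_1, sw_6_2, swl_6_2, sw_6_3, swl_6_3, sw_6_4,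 swl_6_4, sw_6_5, swl_6_5]

  module

lemma L1gen (g h : Module.Dual ℝ (Fin 7 → ℝ)) (u : Fin 7 → Fin 7 → ℝ) :
    contractLeft g (Phi u) * (contractLeft h (Phi u) * Phi u) =
      (6 * ∑ i, g (u i) * h (u i)) • (f u 0 * (f u 1 * (f u 2 * (f u 3 * (f u 4 * (f u 5 * (f u 6))))))) := by
  rw [CPhi g u, CPhi h u, stage2 h u]
  rw [Fin.sum_univ_seven]

  simp only [S, mul_add, add_mul, mul_sub, sub_mul, mul_assoc, smul_mul_assoc, mul_smul_comm, smul_smul, neg_mul, mul_neg, neg_neg, zero_mul, mul_zero, smul_zero, add_zero, zero_add, sub_zero, zero_sub, neg_zero, fsq, fsq', sw_1_0, swl_1_0, sw_2_0, swl_2_0, sw_2_1, swl_2_1, sw_3_0, swl_3_0, sw_3_1, swl_3_1, sw_3_2, swl_3_2, sw_4_0, swl_4_0, sw_4_1, swl_4_1, sw_4_2, swl_4_2, sw_4_3, swl_4_3, sw_5_0, swl_5_0, sw_5_1, swl_5_1, sw_5_2, swl_5_2, sw_5_3, swl_5_3, sw_5_4, swl_5_4, sw_6_0, swl_6_0, sw_6_1,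 swl_6_1, sw_6_2, swl_6_2, sw_6_3, swl_6_3, sw_6_4, swl_6_4, sw_6_5, swl_6_5]

  module

noncomputable def fam : ∀ i : ℕ, (Fin 7 → ℝ) [⋀^Fin i]→ₗ[ℝ] ℝ
  | 7 => Matrix.detRowAlternating
  | _ => 0
noncomputable def F : ExteriorAlgebra ℝ (Fin 7 → ℝ) →ₗ[ℝ] ℝ := liftAlternating fam
lemma Fvol (u : Fin 7 → Fin 7 → ℝ) :
    F (f u 0 * (f u 1 * (f u 2 * (f u 3 * (f u 4 * (f u 5 * f u 6)))))) = Matrix.det u := by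
  have h : f u 0 * (f u 1 * (f u 2 * (f u 3 * (f u 4 * (f u 5 * f u 6))))) = ιMulti ℝ 7 u := by
    rw [ιMulti_apply]
    norm_num [List.ofFn_succ, f]
    rfl
  rw [h, F, liftAlternating_apply_ιMulti]
  show Matrix.detRowAlternating u = _
  rfl

theorem detlem {n : ℕ} (W : Matrix (Fin n) (Fin n) ℝ) (d : ℝ) (hdW : W.det = d)
    (h : d • (W * Matrix.transpose W) = 1) : d ^ (n + 2) = 1 := by
  have h2 : Matrix.det (d • (W * Matrix.transpose W)) = Matrix.det (1 : Matrix (Fin n) (Fin n) ℝ) := by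
    rw [h]
  rw [Matrix.det_smul, Matrix.det_one, Matrix.det_mul, Matrix.det_transpose, hdW,
    Fintype.card_fin] at h2
  rw [pow_add]
  linear_combination h2

theorem stmt10 (A : (Fin 7 → ℝ) ≃ₗ[ℝ] (Fin 7 → ℝ))
    (hA : ExteriorAlgebra.map (A.toLinearMap) φ₀ = φ₀) :
    (∀ v w : Fin 7 → ℝ, ∑ i, A v i * A w i = ∑ i, v i * w i) ∧
    LinearMap.det A.toLinearMap = 1 := by
  classical
  set s : Fin 7 → Fin 7 → ℝ := fun i => Pi.single i 1 with hs
  set u : Fin 7 → Fin 7 → ℝ := fun j => A (Pi.single j 1) with hu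
  have hφs : φ₀ = Phi s := by
    simp only [φ₀, Phi, e, f, hs, mul_assoc]
  have hmap : ExteriorAlgebra.map A.toLinearMap (Phi s) = Phi u := by
    simp only [Phi, f, map_add, map_sub, map_mul, ExteriorAlgebra.map_apply_ι, hs, hu,
      LinearEquiv.coe_coe]
  have hPhi : Phi u = Phi s := by rw [← hmap, ← hφs, hA, hφs]
  set d : ℝ := LinearMap.det A.toLinearMap with hd
  set W : Matrix (Fin 7) (Fin 7) ℝ := (fun a b => u b a : Matrix (Fin 7) (Fin 7) ℝ) with hW
  have hdetu : Matrix.det u = d := by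
    have h2 : Matrix.transpose
        (LinearMap.toMatrix (Pi.basisFun ℝ (Fin 7)) (Pi.basisFun ℝ (Fin 7)) A.toLinearMap) = u := by
      ext i j
      rw [Matrix.transpose_apply, LinearMap.toMatrix_apply, hu]
      simp
    rw [← h2, Matrix.det_transpose, LinearMap.det_toMatrix, hd]
  have hdets : Matrix.det s = 1 := by
    have h1 : (1 : Matrix (Fin 7) (Fin 7) ℝ) = s := by
      ext i j
      rw [Matrix.one_apply]
      by_cases h : i = j
      · simp [hs, h, Pi.single_apply]
      · simp [hs, h, Pi.single_apply, Ne.symm h]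
    rw [← h1, Matrix.det_one]
  have key : ∀ a b : Fin 7, (W * (Matrix.transpose W)) a b * d = (1 : Matrix (Fin 7) (Fin 7) ℝ) a b := by
    intro a b
    have h1 := L1gen (LinearMap.proj a) (LinearMap.proj b) s
    have h2 := L1gen (LinearMap.proj a) (LinearMap.proj b) u
    rw [hPhi] at h2
    have h3 := congrArg F (h2.symm.trans h1)
    rw [map_smul, map_smul, Fvol, Fvol, hdetu, hdets, smul_eq_mul, smul_eq_mul, mul_one] at h3
    have hl : (∑ i, (LinearMap.proj (R := ℝ) (φ := fun _ : Fin 7 => ℝ) a) (s i) *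
        (LinearMap.proj (R := ℝ) (φ := fun _ : Fin 7 => ℝ) b) (s i)) =
        (1 : Matrix (Fin 7) (Fin 7) ℝ) a b := by
      simp [hs, LinearMap.proj_apply, Pi.single_apply, Matrix.one_apply, eq_comm]
    have hr : (∑ i, (LinearMap.proj (R := ℝ) (φ := fun _ : Fin 7 => ℝ) a) (u i) *
        (LinearMap.proj (R := ℝ) (φ := fun _ : Fin 7 => ℝ) b) (u i)) = (W * (Matrix.transpose W)) a b := by
      rw [Matrix.mul_apply]
      simp only [Matrix.transpose_apply]
      simp [Matrix.mul_apply, hW, LinearMap.proj_apply]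
    rw [hl, hr] at h3
    linear_combination h3 / 6
  have hkeyM : (d • (W * (Matrix.transpose W))) = (1 : Matrix (Fin 7) (Fin 7) ℝ) := by
    ext a b
    rw [Matrix.smul_apply, smul_eq_mul, mul_comm, key]
  have hdW : W.det = d := by
    have h3 : LinearMap.toMatrix (Pi.basisFun ℝ (Fin 7)) (Pi.basisFun ℝ (Fin 7)) A.toLinearMap
        = W := by
      ext i j
      rw [LinearMap.toMatrix_apply, hW]
      simp [hu]
    rw [← h3, LinearMap.det_toMatrix, hd]
  have h9 : d ^ 9 = 1 := by
    have h := detlem W d hdW hkeyM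
    norm_num at h
    exact h
  have hd1 : d = 1 := by
    rcases lt_trichotomy d 1 with h | h | h
    · rcases le_or_gt d 0 with h0 | h0
      · have : d ^ 9 ≤ 0 := Odd.pow_nonpos (by decide) h0
        linarith
      · have : d ^ 9 < 1 := pow_lt_one₀ (le_of_lt h0) h (by norm_num)
        linarith
    · exact h
    · have : 1 < d ^ 9 := one_lt_pow₀ h (by norm_num)
      linarith
  have hWWt : W * (Matrix.transpose W) = 1 := by
    rw [← hkeyM, hd1, one_smul]
  have hWtW : (Matrix.transpose W) * W = 1 := mul_eq_one_comm.mp hWWt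
  constructor
  · intro v w
    have hAv : ∀ (v : Fin 7 → ℝ) (i : Fin 7), A v i = ∑ j, v j * u j i := by
      intro v i
      have hv : v = ∑ j, Pi.single j (v j) := (Finset.univ_sum_single v).symm
      conv_lhs => rw [hv]
      rw [map_sum]
      rw [Finset.sum_apply]
      refine Finset.sum_congr rfl fun j _ => ?_
      have : Pi.single j (v j) = v j • (Pi.single j (1 : ℝ) : Fin 7 → ℝ) := by
        funext k
        by_cases h : k = j <;> simp [Pi.single_apply, h]
      rw [this, map_smul, Pi.smul_apply, smul_eq_mul, hu]
    have hcol : ∀ a b : Fin 7, (∑ i, u a i * u b i) = if a = b then (1:ℝ) else 0 := by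
      intro a b
      have := congrFun (congrFun hWtW a) b
      rw [Matrix.mul_apply] at this
      simp only [Matrix.transpose_apply] at this
      simpa [Matrix.mul_apply, Matrix.transpose_apply, Matrix.one_apply, hW] using this
    calc (∑ i, A v i * A w i)
        = ∑ i, (∑ a, v a * u a i) * (∑ b, w b * u b i) := by simp_rw [hAv]
      _ = ∑ i, ∑ a, ∑ b, (v a * w b) * (u a i * u b i) := by
            refine Finset.sum_congr rfl fun i _ => ?_
            rw [Finset.sum_mul_sum]
            exact Finset.sum_congr rfl fun a _ => Finset.sum_congr rfl fun b _ => by ring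
      _ = ∑ a, ∑ b, (v a * w b) * (∑ i, u a i * u b i) := by
            rw [Finset.sum_comm]
            refine Finset.sum_congr rfl fun a _ => ?_
            rw [Finset.sum_comm]
            refine Finset.sum_congr rfl fun b _ => ?_
            rw [← Finset.mul_sum]
      _ = ∑ i, v i * w i := by
            simp_rw [hcol]
            simp [Finset.sum_ite_eq', mul_ite]
  · exact hd1
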